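/- With notation as in the lifted connection construction, A is locally symmetric (∇R = 0) if and only if B is locally symmetric (∇^B R^B = 0). -/
import Mathlib


/-- `A` is locally symmetric (`∇R = 0`) if and only if the lifted connection
`B` on `𝔤* ⋉ 𝔤*` is locally symmetric (`∇^B R^B = 0`). -/
theorem lifted_connection_locally_symmetric_iff
    (L : Type*) [LieRing L] [LieAlgebra ℝ L]
    (A : L →ₗ[ℝ] L →ₗ[ℝ] L) :
    let R : L → L → L → L :=
      fun α β γ => A α (A β γ) - A β (A α γ) - A ⁅α, β⁆ γ
    let nablaR : L → L → L → L → L :=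
      fun α β γ δ =>
        A α (R β γ δ) - R (A α β) γ δ - R β (A α γ) δ - R β γ (A α δ)
    let br : L × L → L × L → L × L :=
      fun p q => (⁅p.1, q.2⁆ + ⁅p.2, q.1⁆, ⁅p.2, q.2⁆)
    let B : L × L → L × L → L × L :=
      fun p q => (A p.1 q.2 + A p.2 q.1, A p.2 q.2)
    let RB : L × L → L × L → L × L → L × L :=
      fun p q r => B p (B q r) - B q (B p r) - B (br p q) r
    let nablaRB : L × L → L × L → L × L → L × L → L × L :=
      fun p q r s =>
        B p (RB q r s) - RB (B p q) r s - RB q (B p r) s - RB q r (B p s)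
    ((∀ α β γ δ : L, nablaR α β γ δ = 0) ↔
      (∀ p q r s : L × L, nablaRB p q r s = 0)) := by
  intro R nablaR br B RB nablaRB
  constructor
  · intro h p q r s
    have key : nablaRB p q r s =
        (nablaR p.2 q.2 r.2 s.1 + nablaR p.2 q.2 r.1 s.2
          + nablaR p.2 q.1 r.2 s.2 + nablaR p.1 q.2 r.2 s.2,
         nablaR p.2 q.2 r.2 s.2) := by
      refine Prod.ext ?_ ?_ <;>
      · simp only [nablaRB, RB, B, br, nablaR, R, Prod.fst_sub, Prod.snd_sub,
          Prod.fst_add, Prod.snd_add, map_add, map_sub, LinearMap.add_apply,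
          LinearMap.sub_apply, lie_add, add_lie, lie_sub, sub_lie]
        try abel
    simp [key, h, Prod.ext_iff]
  · intro h α β γ δ
    have := congrArg Prod.snd (h (0, α) (0, β) (0, γ) (0, δ))
    simpa [nablaRB, RB, B, br, nablaR, R] using this
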